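/- Let K(g) = (1/2)‖Y − g‖² + R(g) be defined on a real inner product space, where R is convex and ‖·‖ is induced by the inner product. If ĝ minimizes K over a convex set 𝒢, then for every g̅ ∈ 𝒢: (1/2)‖ĝ − g*‖² + (1/2)‖ĝ − g̅‖² + R(ĝ) ≤ (1/2)‖g̅ − g*‖² + ⟨ε, ĝ − g̅⟩ + R(g̅), where Y = g* + ε. -/

import Mathlib

theorem stmt0 {H : Type*} [NormedAddCommGroup H] [InnerProductSpace ℝ H]
    (G : Set H) (hG : Convex ℝ G) (R : H → ℝ) (hR : ConvexOn ℝ Set.univ R)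
    (Y gstar ε : H) (hY : Y = gstar + ε)
    (ghat : H) (hmem : ghat ∈ G)
    (hmin : ∀ g ∈ G, ‖Y - ghat‖^2 / 2 + R ghat ≤ ‖Y - g‖^2 / 2 + R g)
    (gbar : H) (hbar : gbar ∈ G) :
    ‖ghat - gstar‖^2 / 2 + ‖ghat - gbar‖^2 / 2 + R ghat
      ≤ ‖gbar - gstar‖^2 / 2 + (inner ℝ ε (ghat - gbar) : ℝ) + R gbar := by
  set u := Y - ghat with hu
  set v := gbar - ghat with hv
  -- key inequality: ⟪u, v⟫ ≤ R gbar - R ghat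
  have key : (inner ℝ u v : ℝ) ≤ R gbar - R ghat := by
    apply le_of_forall_pos_le_add
    intro δ hδ
    set t : ℝ := min 1 (δ / (‖v‖^2 / 2 + 1)) with ht
    have hden : (0:ℝ) < ‖v‖^2 / 2 + 1 := by positivity
    have ht0 : 0 < t := lt_min one_pos (div_pos hδ hden)
    have ht1 : t ≤ 1 := min_le_left _ _
    have hmem2 : (1 - t) • ghat + t • gbar ∈ G :=
      hG hmem hbar (by linarith) (le_of_lt ht0) (by ring)
    have heq : (1 - t) • ghat + t • gbar = ghat + t • v := by
      rw [hv]; module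
    have hmin2 := hmin _ hmem2
    rw [heq] at hmin2
    have hRconv : R ((1 - t) • ghat + t • gbar) ≤ (1 - t) * R ghat + t * R gbar :=
      hR.2 (Set.mem_univ _) (Set.mem_univ _) (by linarith) (le_of_lt ht0) (by ring)
    rw [heq] at hRconv
    have hnorm : ‖Y - (ghat + t • v)‖^2 = ‖u‖^2 - 2 * (t * (inner ℝ u v : ℝ)) + t^2 * ‖v‖^2 := by
      have : Y - (ghat + t • v) = u - t • v := by rw [hu]; abel
      rw [this, @norm_sub_sq_real, real_inner_smul_right, norm_smul]
      simp [abs_of_pos ht0]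
      ring
    have h1 : t * (inner ℝ u v : ℝ) ≤ t^2 * ‖v‖^2 / 2 + t * (R gbar - R ghat) := by
      rw [hnorm] at hmin2
      nlinarith [hmin2, hRconv]
    have h2 : (inner ℝ u v : ℝ) ≤ t * ‖v‖^2 / 2 + (R gbar - R ghat) := by
      rw [← mul_le_mul_iff_right₀ ht0]
      nlinarith [h1]
    have h3 : t * (‖v‖^2 / 2) ≤ δ := by
      have htle : t ≤ δ / (‖v‖^2 / 2 + 1) := min_le_right _ _
      have h4 : t * (‖v‖^2 / 2 + 1) ≤ δ := (le_div_iff₀ hden).mp htle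
      nlinarith [ht0.le]
    linarith [h2, h3]
  -- algebraic identity
  have hid : ‖ghat - gstar‖^2 / 2 + ‖ghat - gbar‖^2 / 2
      = ‖gbar - gstar‖^2 / 2 + (inner ℝ ε (ghat - gbar) : ℝ) + (inner ℝ u v : ℝ) := by
    rw [hu, hv, hY, @norm_sub_sq_real, @norm_sub_sq_real, @norm_sub_sq_real]
    simp only [inner_sub_left, inner_sub_right, inner_add_left, inner_add_right]
    have c1 := real_inner_comm ghat gstar
    have c2 := real_inner_comm ghat gbar
    have c3 := real_inner_comm gbar gstar
    have c4 := real_inner_comm ε ghat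
    have c5 := real_inner_comm ε gbar
    have c6 := real_inner_comm ε gstar
    have c7 := real_inner_comm gstar gbar
    have c8 := real_inner_self_eq_norm_sq ghat
    have c9 := real_inner_self_eq_norm_sq gstar
    have c10 := real_inner_self_eq_norm_sq gbar
    ring_nf
    linarith
  linarith [key, hid]
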